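/- If 𝒜 is a completely separable almost disjoint family, then for every B ∈ 𝓘⁺(𝒜) the set {a ∈ 𝒜 : a ⊆ B} has cardinality 𝔠; consequently, every completely separable almost disjoint family is of true cardinality 𝔠. -/

import Mathlib

open Set

namespace PsiSpace

/-- An (infinite) almost disjoint family of infinite subsets of ℕ. -/
def AlmostDisjoint (𝒜 : Set (Set ℕ)) : Prop :=
  𝒜.Infinite ∧ (∀ a ∈ 𝒜, a.Infinite) ∧
    ∀ a ∈ 𝒜, ∀ b ∈ 𝒜, a ≠ b → (a ∩ b).Finite

/-- A maximal almost disjoint family. -/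
def MadFamily (𝒜 : Set (Set ℕ)) : Prop :=
  AlmostDisjoint 𝒜 ∧ ∀ X : Set ℕ, X.Infinite → ∃ a ∈ 𝒜, (a ∩ X).Infinite

/-- 𝒜↾B = {a ∈ 𝒜 : a ∩ B infinite}. -/
def ADRestrict (𝒜 : Set (Set ℕ)) (B : Set ℕ) : Set (Set ℕ) :=
  {a | a ∈ 𝒜 ∧ (a ∩ B).Infinite}

/-- 𝒜 has true cardinality 𝔠. -/
def TrueCardContinuum (𝒜 : Set (Set ℕ)) : Prop :=
  ∀ B : Set ℕ, (ADRestrict 𝒜 B).Finite ∨ Cardinal.mk ↥(ADRestrict 𝒜 B) = Cardinal.continuum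

/-- The underlying set of the Mrówka–Isbell space Ψ(𝒜): ℕ together with the members of 𝒜. -/
def Psi (𝒜 : Set (Set ℕ)) : Type := ℕ ⊕ {a : Set ℕ // a ∈ 𝒜}

/-- The isolated point of Ψ(𝒜) corresponding to n ∈ ℕ. -/
def Psi.nat {𝒜 : Set (Set ℕ)} (n : ℕ) : Psi 𝒜 := Sum.inl n

/-- The point of Ψ(𝒜) corresponding to a ∈ 𝒜. -/
def Psi.pt {𝒜 : Set (Set ℕ)} (a : {a : Set ℕ // a ∈ 𝒜}) : Psi 𝒜 := Sum.inr a

/-- The Mrówka–Isbell topology: each n ∈ ℕ is isolated, and basic neighbourhoods of a ∈ 𝒜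
are {a} ∪ (a \ F) for F finite. Equivalently, U is open iff for every a ∈ 𝒜 with a ∈ U,
all but finitely many elements of a belong to U. -/
instance psiTop (𝒜 : Set (Set ℕ)) : TopologicalSpace (Psi 𝒜) where
  IsOpen U := ∀ a : {a : Set ℕ // a ∈ 𝒜}, Psi.pt a ∈ U →
    {n : ℕ | n ∈ a.1 ∧ Psi.nat n ∉ U}.Finite
  isOpen_univ := fun a _ => by
    convert Set.finite_empty using 1
    ext n
    simp [Set.mem_univ]
  isOpen_inter := fun U V hU hV a ha => by
    refine ((hU a ha.1).union (hV a ha.2)).subset ?_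
    rintro n ⟨hn, hnUV⟩
    by_cases h : Psi.nat n ∈ U
    · exact Or.inr ⟨hn, fun h' => hnUV ⟨h, h'⟩⟩
    · exact Or.inl ⟨hn, h⟩
  isOpen_sUnion := fun S hS a ha => by
    obtain ⟨U, hUS, haU⟩ := ha
    exact (hS U hUS a haU).subset fun n hn => ⟨hn.1, fun h => hn.2 ⟨U, hUS, h⟩⟩

/-- The copy of a set W ⊆ ℕ inside Ψ(𝒜). -/
def PsiNat (𝒜 : Set (Set ℕ)) (W : Set ℕ) : Set (Psi 𝒜) := {x | ∃ n ∈ W, x = Psi.nat n}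

/-- The copy of a subfamily 𝒞 ⊆ 𝒜 inside Ψ(𝒜). -/
def PsiSub (𝒜 𝒞 : Set (Set ℕ)) : Set (Psi 𝒜) :=
  {x | ∃ a : {a : Set ℕ // a ∈ 𝒜}, a.1 ∈ 𝒞 ∧ x = Psi.pt a}

/-- A and B are separated by disjoint open sets. -/
def SepOpen {X : Type*} [TopologicalSpace X] (A B : Set X) : Prop :=
  ∃ U V : Set X, IsOpen U ∧ IsOpen V ∧ A ⊆ U ∧ B ⊆ V ∧ Disjoint U V

/-- Regular closed (closed domain): A is the closure of its interior. -/
def RegClosed {X : Type*} [TopologicalSpace X] (A : Set X) : Prop :=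
  closure (interior A) = A

/-- π-closed: a finite intersection of regular closed sets. -/
def PiClosed {X : Type*} [TopologicalSpace X] (A : Set X) : Prop :=
  ∃ S : Finset (Set X), (∀ B ∈ S, RegClosed B) ∧ A = ⋂₀ ↑S

/-- A is an intersection of at most n regular closed sets. -/
def InterOfAtMost {X : Type*} [TopologicalSpace X] (n : ℕ) (A : Set X) : Prop :=
  ∃ S : Finset (Set X), S.card ≤ n ∧ (∀ B ∈ S, RegClosed B) ∧ A = ⋂₀ ↑S

/-- Almost-normal: disjoint closed + regular closed sets are separated. -/
def AlmostNormal (X : Type*) [TopologicalSpace X] : Prop :=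
  ∀ A B : Set X, IsClosed A → RegClosed B → Disjoint A B → SepOpen A B

/-- π-normal: disjoint closed + π-closed sets are separated. -/
def PiNormal (X : Type*) [TopologicalSpace X] : Prop :=
  ∀ A B : Set X, IsClosed A → PiClosed B → Disjoint A B → SepOpen A B

/-- Quasi-normal: disjoint π-closed sets are separated. -/
def QuasiNormal (X : Type*) [TopologicalSpace X] : Prop :=
  ∀ A B : Set X, PiClosed A → PiClosed B → Disjoint A B → SepOpen A B

/-- Mildly-normal: disjoint regular closed sets are separated. -/
def MildlyNormal (X : Type*) [TopologicalSpace X] : Prop :=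
  ∀ A B : Set X, RegClosed A → RegClosed B → Disjoint A B → SepOpen A B

/-- Partly-normal: disjoint regular closed + π-closed sets are separated. -/
def PartlyNormal (X : Type*) [TopologicalSpace X] : Prop :=
  ∀ A B : Set X, RegClosed A → PiClosed B → Disjoint A B → SepOpen A B

/-- n-partly-normal: disjoint regular closed + (intersection of at most n regular closed)
sets are separated. -/
def NPartlyNormal (n : ℕ) (X : Type*) [TopologicalSpace X] : Prop :=
  ∀ A B : Set X, RegClosed A → InterOfAtMost n B → Disjoint A B → SepOpen A B

/-- 𝓘⁺(𝒜): the sets B ⊆ ℕ with 𝒜↾B infinite. -/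
def IPlus (𝒜 : Set (Set ℕ)) : Set (Set ℕ) := {B | (ADRestrict 𝒜 B).Infinite}

/-- Completely separable almost disjoint family. -/
def CompletelySeparable (𝒜 : Set (Set ℕ)) : Prop :=
  ∀ B ∈ IPlus 𝒜, ∃ a ∈ 𝒜, a ⊆ B

/-- A Luzin family: it can be enumerated as ⟨a_α : α < ω₁⟩ so that for each α < ω₁ and
n ∈ ℕ, the set {β < α : a_α ∩ a_β ⊆ n} is finite. -/
def LuzinFamily (𝒜 : Set (Set ℕ)) : Prop :=
  ∃ a : Ordinal.{0} → Set ℕ,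
    (∀ α, α < (Cardinal.aleph 1).ord → a α ∈ 𝒜) ∧
    (∀ x ∈ 𝒜, ∃ α, α < (Cardinal.aleph 1).ord ∧ a α = x) ∧
    (∀ α, α < (Cardinal.aleph 1).ord → ∀ β, β < (Cardinal.aleph 1).ord → α ≠ β → a α ≠ a β) ∧
    ∀ α, α < (Cardinal.aleph 1).ord → ∀ n : ℕ,
      {β : Ordinal.{0} | β < α ∧ a α ∩ a β ⊆ Set.Iio n}.Finite

/-- Strongly ℵ₀-separated almost disjoint family. -/
def StronglyAleph0Separated (𝒜 : Set (Set ℕ)) : Prop :=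
  ∀ A B : Set (Set ℕ), A ⊆ 𝒜 → B ⊆ 𝒜 → A.Countable → A.Infinite →
    B.Countable → B.Infinite → Disjoint A B →
    ∃ X : Set ℕ,
      (∀ a ∈ 𝒜, (a \ X).Finite ∨ (a ∩ X).Finite) ∧
      (∀ a ∈ A, (a \ X).Finite) ∧
      (∀ a ∈ B, (a ∩ X).Finite)


/-! ### Auxiliary machinery for Statement 5 -/

/-- The binary tree of sets built from two "child" operations. -/
def treeNode (B : Set ℕ) (s0 s1 : Set ℕ → Set ℕ) : List Bool → Set ℕ
  | [] => B
  | (i :: s) => cond i (s1 (treeNode B s0 s1 s)) (s0 (treeNode B s0 s1 s))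

/-- The initial segment of a branch, as a node of the tree. -/
def branchNode (f : ℕ → Bool) : ℕ → List Bool
  | 0 => []
  | (n+1) => f n :: branchNode f n

lemma aux_diff_IPlus {𝒜 : Set (Set ℕ)} (had : AlmostDisjoint 𝒜) {C a : Set ℕ}
    (hC : C ∈ IPlus 𝒜) (ha : a ∈ 𝒜) : C \ a ∈ IPlus 𝒜 := by
  have hsub : ADRestrict 𝒜 C \ {a} ⊆ ADRestrict 𝒜 (C \ a) := by
    rintro b ⟨⟨hb, hbC⟩, hba⟩
    refine ⟨hb, ?_⟩
    have hfin : (b ∩ a).Finite := had.2.2 b hb a ha (by simpa using hba)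
    refine ((hbC.diff hfin).mono ?_)
    rintro x ⟨⟨hxb, hxC⟩, hx⟩
    exact ⟨hxb, hxC, fun hxa => hx ⟨hxb, hxa⟩⟩
  exact (hC.diff (Set.finite_singleton a)).mono hsub

lemma aux_half {A : Set ℕ} (hA : A.Infinite) :
    ∃ E, E ⊆ A ∧ E.Infinite ∧ (A \ E).Infinite := by
  let e : ℕ ↪ ↥A := hA.natEmbedding
  refine ⟨Set.range (fun n => (e (2 * n) : ℕ)), ?_, ?_, ?_⟩
  · rintro x ⟨n, rfl⟩; exact (e (2 * n)).2
  · exact Set.infinite_range_of_injective (fun n m h => by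
      have := e.injective (Subtype.ext h); omega)
  · refine Set.infinite_of_injective_forall_mem
      (f := fun n => (e (2 * n + 1) : ℕ)) (fun n m h => by
        have := e.injective (Subtype.ext h); omega) (fun n => ?_)
    refine ⟨(e (2 * n + 1)).2, ?_⟩
    rintro ⟨m, hm⟩
    have := e.injective (Subtype.ext hm.symm); omega

lemma aux_split {𝒜 : Set (Set ℕ)} (had : AlmostDisjoint 𝒜) {C : Set ℕ}
    (hC : C ∈ IPlus 𝒜) :
    ∃ C₀ C₁ : Set ℕ, C₀ ⊆ C ∧ C₁ ⊆ C ∧ Disjoint C₀ C₁ ∧ C₀ ∈ IPlus 𝒜 ∧ C₁ ∈ IPlus 𝒜 := by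
  let e : ℕ ↪ ↥(ADRestrict 𝒜 C) := hC.natEmbedding
  let a : ℕ → Set ℕ := fun n => ((e n : Set ℕ))
  have ha𝒜 : ∀ n, a n ∈ 𝒜 := fun n => (e n).2.1
  have haC : ∀ n, (a n ∩ C).Infinite := fun n => (e n).2.2
  have hane : ∀ {n m : ℕ}, n ≠ m → a n ≠ a m := fun {n m} h hnm =>
    h (e.injective (Subtype.ext hnm))
  -- disjointified pieces
  let c : ℕ → Set ℕ := fun n => (a n ∩ C) \ (⋃ m ∈ Finset.range n, a m)
  have hcinf : ∀ n, (c n).Infinite := by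
    intro n
    have hfin : ((a n) ∩ (⋃ m ∈ Finset.range n, a m)).Finite := by
      rw [Set.inter_iUnion₂]
      exact Set.Finite.biUnion (Finset.range n).finite_toSet
        (fun m hm => had.2.2 (a n) (ha𝒜 n) (a m) (ha𝒜 m)
          (hane (by simp at hm; omega)))
    refine ((haC n).diff hfin).mono ?_
    rintro x ⟨⟨hxa, hxC⟩, hx⟩
    exact ⟨⟨hxa, hxC⟩, fun hxU => hx ⟨hxa, hxU⟩⟩
  have hcsubC : ∀ n, c n ⊆ C := fun n x hx => hx.1.2
  have hcsuba : ∀ n, c n ⊆ a n := fun n x hx => hx.1.1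
  have hcdis : ∀ {n m : ℕ}, n < m → Disjoint (c n) (c m) := by
    intro n m h
    refine Set.disjoint_left.mpr (fun x hxn hxm => ?_)
    exact hxm.2 (Set.mem_biUnion (Finset.mem_range.mpr h) (hcsuba n hxn))
  refine ⟨⋃ n, c (2 * n), ⋃ n, c (2 * n + 1), ?_, ?_, ?_, ?_, ?_⟩
  · exact Set.iUnion_subset (fun n => hcsubC _)
  · exact Set.iUnion_subset (fun n => hcsubC _)
  · refine Set.disjoint_left.mpr ?_
    rintro x hx0 hx1
    obtain ⟨n, hn⟩ := Set.mem_iUnion.mp hx0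
    obtain ⟨m, hm⟩ := Set.mem_iUnion.mp hx1
    rcases Nat.lt_or_ge (2 * n) (2 * m + 1) with h | h
    · have h' : 2 * n < 2 * m + 1 ∨ 2 * m + 1 < 2 * n := by omega
      rcases h' with h' | h'
      · exact Set.disjoint_left.mp (hcdis h') hn hm
      · exact Set.disjoint_left.mp (hcdis h') hm hn
    · exact Set.disjoint_left.mp (hcdis (by omega)) hm hn
  · refine Set.infinite_of_injective_forall_mem (f := fun n => a (2 * n)) ?_ ?_
    · intro n m h
      by_contra hne
      exact hane (by omega : 2 * n ≠ 2 * m) h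
    · intro n
      refine ⟨ha𝒜 _, ?_⟩
      refine (hcinf (2 * n)).mono ?_
      intro x hx
      exact ⟨hcsuba _ hx, Set.mem_iUnion.mpr ⟨n, hx⟩⟩
  · refine Set.infinite_of_injective_forall_mem (f := fun n => a (2 * n + 1)) ?_ ?_
    · intro n m h
      by_contra hne
      exact hane (by omega : 2 * n + 1 ≠ 2 * m + 1) h
    · intro n
      refine ⟨ha𝒜 _, ?_⟩
      refine (hcinf (2 * n + 1)).mono ?_
      intro x hx
      exact ⟨hcsuba _ hx, Set.mem_iUnion.mpr ⟨n, hx⟩⟩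

/-- Key lemma: a completely separable a.d. family has 𝔠-many members below each B ∈ 𝓘⁺. -/
lemma aux_key {𝒜 : Set (Set ℕ)} (had : AlmostDisjoint 𝒜) (hcs : CompletelySeparable 𝒜)
    {B : Set ℕ} (hB : B ∈ IPlus 𝒜) :
    ∃ F : (ℕ → Bool) → Set ℕ, Function.Injective F ∧ ∀ f, F f ∈ 𝒜 ∧ F f ⊆ B := by
  classical
  -- the step: pick a member inside C, and split the rest into two disjoint IPlus pieces
  have hstep : ∀ C : Set ℕ, C ∈ IPlus 𝒜 → ∃ a C₀ C₁ : Set ℕ,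
      a ∈ 𝒜 ∧ a ⊆ C ∧ Disjoint C₀ C₁ ∧ C₀ ⊆ C \ a ∧ C₁ ⊆ C \ a ∧
      C₀ ∈ IPlus 𝒜 ∧ C₁ ∈ IPlus 𝒜 := by
    intro C hC
    obtain ⟨a, ha𝒜, haC⟩ := hcs C hC
    obtain ⟨C₀, C₁, h0, h1, hdis, h0I, h1I⟩ := aux_split had (aux_diff_IPlus had hC ha𝒜)
    exact ⟨a, C₀, C₁, ha𝒜, haC, hdis, h0, h1, h0I, h1I⟩
  choose! sa s0 s1 h1 h2 h3 h4 h5 h6 h7 using hstep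
  set T : List Bool → Set ℕ := treeNode B s0 s1 with hTdef
  have hT : ∀ s, T s ∈ IPlus 𝒜 := by
    intro s
    induction s with
    | nil => exact hB
    | cons i s ih =>
      cases i
      · exact h6 (T s) ih
      · exact h7 (T s) ih
  set A : List Bool → Set ℕ := fun s => sa (T s) with hAdef
  have hA𝒜 : ∀ s, A s ∈ 𝒜 := fun s => h1 (T s) (hT s)
  have hAinf : ∀ s, (A s).Infinite := fun s => had.2.1 (A s) (hA𝒜 s)
  have hchild : ∀ (i : Bool) (s : List Bool), T (i :: s) ⊆ T s \ A s := by
    intro i s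
    cases i
    · exact h4 (T s) (hT s)
    · exact h5 (T s) (hT s)
  have hsib : ∀ (i j : Bool) (s : List Bool), i ≠ j → Disjoint (T (i :: s)) (T (j :: s)) := by
    intro i j s hij
    cases i <;> cases j <;> simp at hij ⊢ <;>
      first
        | exact h3 (T s) (hT s)
        | exact (h3 (T s) (hT s)).symm
  set R : (ℕ → Bool) → ℕ → List Bool := branchNode with hRdef
  have hRsucc : ∀ f n, R f (n + 1) = f n :: R f n := fun f n => rfl
  have hmono : ∀ (f : ℕ → Bool) (n k : ℕ), T (R f (n + k)) ⊆ T (R f n) := by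
    intro f n k
    induction k with
    | zero => exact Set.Subset.rfl
    | succ k ih =>
      exact Set.Subset.trans (Set.Subset.trans (hchild (f (n + k)) (R f (n + k)))
        Set.diff_subset) ih
  have hmono' : ∀ (f : ℕ → Bool) {n m : ℕ}, n ≤ m → T (R f m) ⊆ T (R f n) := by
    intro f n m h
    obtain ⟨k, rfl⟩ := Nat.exists_eq_add_of_le h
    exact hmono f n k
  have hAsubT : ∀ s, A s ⊆ T s := fun s => h2 (T s) (hT s)
  have hlev : ∀ (f : ℕ → Bool) {n m : ℕ}, n < m → Disjoint (A (R f m)) (A (R f n)) := by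
    intro f n m h
    refine Set.disjoint_left.mpr (fun x hxm hxn => ?_)
    have hx1 : x ∈ T (R f (n + 1)) := hmono' f h (hAsubT _ hxm)
    exact (hchild (f n) (R f n) hx1).2 hxn
  have hAne : ∀ (f : ℕ → Bool) {n m : ℕ}, n ≠ m → A (R f n) ≠ A (R f m) := by
    intro f n m hnm heq
    rcases Nat.lt_or_ge n m with h | h
    · obtain ⟨x, hx⟩ := (hAinf (R f m)).nonempty
      exact Set.disjoint_left.mp (hlev f h) hx (heq ▸ hx)
    · have h' : m < n := by omega
      obtain ⟨x, hx⟩ := (hAinf (R f n)).nonempty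
      exact Set.disjoint_left.mp (hlev f h') hx (heq.symm ▸ hx)
  -- halves
  choose! E hEsub hEinf hRinf using fun (A' : Set ℕ) (h : A'.Infinite) => aux_half h
  set D : (ℕ → Bool) → Set ℕ := fun f => ⋃ n, E (A (R f n)) with hDdef
  have hEA : ∀ s, E (A s) ⊆ A s := fun s => hEsub (A s) (hAinf s)
  have hDB : ∀ f, D f ⊆ B := by
    intro f
    refine Set.iUnion_subset (fun n => ?_)
    have : T (R f n) ⊆ T (R f 0) := hmono' f (Nat.zero_le n)
    exact Set.Subset.trans (Set.Subset.trans (hEA _) (hAsubT _)) this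
  have hDI : ∀ f, D f ∈ IPlus 𝒜 := by
    intro f
    refine Set.infinite_of_injective_forall_mem (f := fun n => A (R f n)) ?_ ?_
    · intro n m h
      by_contra hnm
      exact hAne f hnm h
    · intro n
      refine ⟨hA𝒜 _, ?_⟩
      refine ((hEinf (A (R f n)) (hAinf _)).mono ?_)
      intro x hx
      exact ⟨hEA _ hx, Set.mem_iUnion.mpr ⟨n, hx⟩⟩
  choose b hb𝒜 hbD using fun f => hcs (D f) (hDI f)
  -- b f is never a level member of its own branch
  have hbne : ∀ f n, b f ≠ A (R f n) := by
    intro f n heq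
    obtain ⟨x, hxA, hxE⟩ := (hRinf (A (R f n)) (hAinf _)).nonempty
    have hxb : x ∈ b f := by rw [heq]; exact hxA
    have hxD : x ∈ D f := hbD f hxb
    obtain ⟨m, hm⟩ := Set.mem_iUnion.mp hxD
    rcases eq_or_ne m n with rfl | hmn
    · exact hxE hm
    · rcases Nat.lt_or_ge m n with h | h
      · exact Set.disjoint_left.mp (hlev f h) hxA (hEA _ hm)
      · exact Set.disjoint_left.mp (hlev f (by omega)) (hEA _ hm) hxA
  refine ⟨b, ?_, fun f => ⟨hb𝒜 f, Set.Subset.trans (hbD f) (hDB f)⟩⟩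
  intro f g hfg
  by_contra hne
  have hex : ∃ k, f k ≠ g k := Function.ne_iff.mp hne
  set k := Nat.find hex with hkdef
  have hk : f k ≠ g k := Nat.find_spec hex
  have hmin : ∀ i, i < k → f i = g i := fun i hi => by
    by_contra h
    exact Nat.find_min hex hi h
  have hReq : ∀ n, n ≤ k → R f n = R g n := by
    intro n hn
    induction n with
    | zero => rfl
    | succ n ih =>
      rw [hRsucc, hRsucc, hmin n (by omega), ih (by omega)]
  have hsplit : Disjoint (T (R f (k + 1))) (T (R g (k + 1))) := by
    rw [hRsucc, hRsucc, hReq k le_rfl]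
    exact hsib (f k) (g k) (R g k) hk
  -- D f ∩ D g is inside the common levels ≤ k
  have hDinter : D f ∩ D g ⊆ ⋃ n ∈ Finset.range (k + 1), A (R f n) := by
    rintro x ⟨hxf, hxg⟩
    obtain ⟨n, hn⟩ := Set.mem_iUnion.mp hxf
    obtain ⟨m, hm⟩ := Set.mem_iUnion.mp hxg
    rcases Nat.lt_or_ge n (k + 1) with h | h
    · exact Set.mem_biUnion (Finset.mem_range.mpr h) (hEA _ hn)
    · rcases Nat.lt_or_ge m (k + 1) with h' | h'
      · have : A (R g m) = A (R f m) := by rw [hReq m (by omega)]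
        exact Set.mem_biUnion (Finset.mem_range.mpr h')
          (this ▸ hEA _ hm)
      · exfalso
        have hxTf : x ∈ T (R f (k + 1)) := hmono' f h (hAsubT _ (hEA _ hn))
        have hxTg : x ∈ T (R g (k + 1)) := hmono' g h' (hAsubT _ (hEA _ hm))
        exact Set.disjoint_left.mp hsplit hxTf hxTg
  have hbsub : (b f : Set ℕ) ⊆ ⋃ n ∈ Finset.range (k + 1), A (R f n) := by
    intro x hx
    have hxg : x ∈ b g := by rw [← hfg]; exact hx
    exact hDinter ⟨hbD f hx, hbD g hxg⟩
  have hbinf : (b f).Infinite := had.2.1 (b f) (hb𝒜 f)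
  have hpiece : ∃ n ∈ Finset.range (k + 1), ((b f) ∩ A (R f n)).Infinite := by
    by_contra h
    push_neg at h
    have hfin : (⋃ n ∈ Finset.range (k + 1), (b f) ∩ A (R f n)).Finite :=
      Set.Finite.biUnion (Finset.range (k + 1)).finite_toSet
        (fun n hn => h n hn)
    refine hbinf (hfin.subset ?_)
    intro x hx
    obtain ⟨n, hn, hxn⟩ := Set.mem_iUnion₂.mp (hbsub hx)
    exact Set.mem_biUnion hn ⟨hx, hxn⟩
  obtain ⟨n, _, hninf⟩ := hpiece
  have : b f = A (R f n) := by
    by_contra hne'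
    exact hninf (had.2.2 (b f) (hb𝒜 f) (A (R f n)) (hA𝒜 _) hne')
  exact hbne f n this

/-- If 𝒜 is a completely separable almost disjoint family, then for every
B ∈ 𝓘⁺(𝒜) the set {a ∈ 𝒜 : a ⊆ B} has cardinality 𝔠; consequently every completely
separable almost disjoint family is of true cardinality 𝔠. -/
theorem completelySeparable_trueCard (𝒜 : Set (Set ℕ)) (had : AlmostDisjoint 𝒜)
    (hcs : CompletelySeparable 𝒜) :
    (∀ B ∈ IPlus 𝒜, Cardinal.mk ↥{a : Set ℕ | a ∈ 𝒜 ∧ a ⊆ B} = Cardinal.continuum) ∧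
      TrueCardContinuum 𝒜 := by
  classical
  have main : ∀ B ∈ IPlus 𝒜,
      Cardinal.mk ↥{a : Set ℕ | a ∈ 𝒜 ∧ a ⊆ B} = Cardinal.continuum := by
    intro B hB
    obtain ⟨F, hFinj, hF⟩ := aux_key had hcs hB
    refine le_antisymm ?_ ?_
    · calc Cardinal.mk ↥{a : Set ℕ | a ∈ 𝒜 ∧ a ⊆ B}
          ≤ Cardinal.mk (Set ℕ) := Cardinal.mk_subtype_le _
        _ = Cardinal.continuum := by
            rw [Cardinal.mk_set, Cardinal.mk_nat, Cardinal.two_power_aleph0]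
    · have hinj : Function.Injective
          (fun f : ℕ → Bool => (⟨F f, (hF f).1, (hF f).2⟩ :
            ↥{a : Set ℕ | a ∈ 𝒜 ∧ a ⊆ B})) := by
        intro f g h
        exact hFinj (congrArg Subtype.val h)
      have := Cardinal.mk_le_of_injective hinj
      calc Cardinal.continuum = Cardinal.mk (ℕ → Bool) := by
            rw [Cardinal.mk_arrow]
            simp [Cardinal.mk_bool, Cardinal.two_power_aleph0]
        _ ≤ _ := this
  refine ⟨main, ?_⟩
  intro B
  by_cases hfin : (ADRestrict 𝒜 B).Finite
  · exact Or.inl hfin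
  · right
    have hB : B ∈ IPlus 𝒜 := hfin
    refine le_antisymm ?_ ?_
    · calc Cardinal.mk ↥(ADRestrict 𝒜 B)
          ≤ Cardinal.mk (Set ℕ) := Cardinal.mk_subtype_le _
        _ = Cardinal.continuum := by
            rw [Cardinal.mk_set, Cardinal.mk_nat, Cardinal.two_power_aleph0]
    · have hsub : {a : Set ℕ | a ∈ 𝒜 ∧ a ⊆ B} ⊆ ADRestrict 𝒜 B := by
        rintro a ⟨ha, hab⟩
        exact ⟨ha, (had.2.1 a ha).mono (Set.subset_inter Set.Subset.rfl hab)⟩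
      calc Cardinal.continuum
          = Cardinal.mk ↥{a : Set ℕ | a ∈ 𝒜 ∧ a ⊆ B} := (main B hB).symm
        _ ≤ Cardinal.mk ↥(ADRestrict 𝒜 B) := Cardinal.mk_le_mk_of_subset hsub


end PsiSpace
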